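/- Define Γ: ∧^{2r} g → S^r(g) on decomposables by Γ(w₁∧⋯∧w_{2r}) = Σ_{ν∈Π_r} [w_{ν(1)},w_{ν(2)}]⋯[w_{ν(2r-1)},w_{ν(2r)}], summing over the (2r−1)!! perfect matchings of {1,…,2r} (with signs +1). Then for any x ∈ g and ζ ∈ ∧^{2r} g, Γ(ζ)(x) = ((−1)^r / r!)·((dx)^r, ζ), where ( , ) is the Killing-form pairing on ∧^{2r} g. -/

import Mathlib

set_option maxHeartbeats 1000000
set_option maxRecDepth 8000


open ExteriorAlgebra Module

/-- The value at `x` of `Γ(w₁ ∧ ⋯ ∧ w_{2r}) ∈ S^r(g)`, i.e.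
`∑_{ν ∈ Π_r} B([w_{ν 1}, w_{ν 2}], x) ⋯ B([w_{ν (2r-1)}, w_{ν (2r)}], x)`, the sum over
the `(2r-1)!!` perfect matchings of `{1, …, 2r}` (representatives with sign `+1`).
Since the summand `sg σ · ∏ᵢ B([w_{σ(2i-1)}, w_{σ(2i)}], x)` is constant on the
`r! 2^r`-element cosets of the stabilizer of the standard matching, this equals the
average `(1/(r! 2^r)) ∑_{σ ∈ Σ_{2r}} sg σ · ∏ᵢ B([w_{σ(2i-1)}, w_{σ(2i)}], x)`. -/
noncomputable def GammaVal {L : Type*} [LieRing L] [LieAlgebra ℂ L]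
    [Module.Finite ℂ L] (r : ℕ) (w : Fin (2 * r) → L) (x : L) : ℂ :=
  (1 / ((Nat.factorial r : ℂ) * 2 ^ r)) *
    ∑ σ : Equiv.Perm (Fin (2 * r)), ((Equiv.Perm.sign σ : ℤ) : ℂ) *
      ∏ i : Fin r,
        killingForm ℂ L
          ⁅w (σ ⟨2 * i.1, by have := i.isLt; omega⟩),
            w (σ ⟨2 * i.1 + 1, by have := i.isLt; omega⟩)⁆ x

section Aux

set_option linter.unusedSectionVars false

lemma cons_mk_succ {α : Sort*} {n : ℕ} (x : α) (p : Fin n → α) (j : ℕ) (h : j + 1 < n + 1) :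
    (Fin.cons x p : Fin (n + 1) → α) ⟨j + 1, h⟩ = p ⟨j, Nat.lt_of_succ_lt_succ h⟩ := by
  have e : (⟨j + 1, h⟩ : Fin (n + 1)) = Fin.succ ⟨j, Nat.lt_of_succ_lt_succ h⟩ := by
    apply Fin.ext; simp
  rw [e, Fin.cons_succ]

variable {L : Type*} [AddCommGroup L] [Module ℂ L]

/-- Interleaved family: `a (f 0), c (f 0), a (f 1), c (f 1), …`. -/
noncomputable def Vfun {κ : Type*} (a c : κ → L) (m : ℕ) (f : Fin m → κ) :
    Fin (2 * m) → L :=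
  fun j => if j.1 % 2 = 0 then a (f ⟨j.1 / 2, by have := j.isLt; omega⟩)
    else c (f ⟨j.1 / 2, by have := j.isLt; omega⟩)

lemma Vfun_even {κ : Type*} (a c : κ → L) (m : ℕ) (f : Fin m → κ) (k : Fin m)
    (h : 2 * k.1 < 2 * m) : Vfun a c m f ⟨2 * k.1, h⟩ = a (f k) := by
  simp only [Vfun, Nat.mul_mod_right, if_true, Nat.mul_div_cancel_left _ (by norm_num : 0 < 2)]

lemma Vfun_odd {κ : Type*} (a c : κ → L) (m : ℕ) (f : Fin m → κ) (k : Fin m)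
    (h : 2 * k.1 + 1 < 2 * m) : Vfun a c m f ⟨2 * k.1 + 1, h⟩ = c (f k) := by
  have h1 : (2 * k.1 + 1) % 2 = 1 := by omega
  have h2 : (2 * k.1 + 1) / 2 = k.1 := by omega
  simp only [Vfun, h1, h2, Nat.one_ne_zero, if_false]

lemma iMulti_cons {n : ℕ} (u : L) (v : Fin n → L) :
    ιMulti ℂ (n + 1) (Fin.cons u v) = ExteriorAlgebra.ι ℂ u * ιMulti ℂ n v := by
  rw [ιMulti_succ_apply, Fin.cons_zero]
  have h : Matrix.vecTail (Fin.cons u v) = v := by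
    funext j; simp [Matrix.vecTail, Function.comp_def]
  rw [h]

lemma pow_sum_ii {κ : Type*} [Fintype κ] (a c : κ → L) (m : ℕ) :
    (∑ i, ExteriorAlgebra.ι ℂ (a i) * ExteriorAlgebra.ι ℂ (c i)) ^ m
      = ∑ f : Fin m → κ, ιMulti ℂ (2 * m) (Vfun a c m f) := by
  induction m with
  | zero => simp
  | succ m ih =>
      rw [pow_succ', ih, Finset.mul_sum]
      rw [← Equiv.sum_comp (Fin.consEquiv (fun _ : Fin (m + 1) => κ))
        (fun g => ιMulti ℂ (2 * (m + 1)) (Vfun a c (m + 1) g))]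
      rw [Fintype.sum_prod_type, Finset.sum_comm]
      refine Finset.sum_congr rfl fun f _ => ?_
      rw [Finset.sum_mul]
      refine Finset.sum_congr rfl fun i _ => ?_
      have hV : Vfun a c (m + 1) ((Fin.consEquiv fun _ : Fin (m + 1) => κ) (i, f))
          = (Fin.cons (a i) (Fin.cons (c i) (Vfun a c m f)) : Fin (2 * m + 1 + 1) → L) := by
        funext j
        refine Fin.cases ?_ (fun j' => ?_) j
        · simp [Fin.consEquiv, Vfun, Fin.mk_zero]
        · refine Fin.cases ?_ (fun j'' => ?_) j'
          · have h1 : 1 % (2 * (m + 1)) / 2 = 0 := by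
              rw [Nat.one_mod_eq_one.mpr (by omega)]
            simp [Fin.consEquiv, Vfun, Fin.cons_succ, Fin.mk_zero, h1]
          · simp only [Fin.consEquiv, Equiv.coe_fn_mk, Fin.cons_succ, Vfun, Fin.val_succ]
            have h2 : (j''.1 + 1 + 1) / 2 = j''.1 / 2 + 1 := by omega
            have h3 : (j''.1 + 1 + 1) % 2 = j''.1 % 2 := by omega
            simp only [h2, h3, cons_mk_succ]
      show (ExteriorAlgebra.ι ℂ (a i) * ExteriorAlgebra.ι ℂ (c i)) * ιMulti ℂ (2 * m) (Vfun a c m f)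
          = ιMulti ℂ (2 * m + 1 + 1) (Vfun a c (m + 1) ((Fin.consEquiv fun _ : Fin (m + 1) => κ) (i, f)))
      rw [hV, iMulti_cons, iMulti_cons, mul_assoc]

end Aux

lemma prod_pairs {M : Type*} [CommMonoid M] :
    ∀ (r : ℕ) (g : Fin (2 * r) → M),
      ∏ j, g j = ∏ k : Fin r,
        (g ⟨2 * k.1, by have := k.isLt; omega⟩ * g ⟨2 * k.1 + 1, by have := k.isLt; omega⟩) := by
  intro r
  induction r with
  | zero => intro g; simp
  | succ m ih =>
      intro g
      refine Eq.trans (Fin.prod_univ_castSucc (n := 2 * m + 1) (f := g)) ?_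
      refine Eq.trans (congrArg (· * g (Fin.last (2 * m + 1)))
        (Fin.prod_univ_castSucc (n := 2 * m) (f := fun i : Fin (2 * m + 1) => g i.castSucc))) ?_
      rw [ih (fun j => g (Fin.castSucc (Fin.castSucc j))), Fin.prod_univ_castSucc (n := m)]
      beta_reduce
      rw [mul_assoc]
      congr 1

lemma sum_prod_swap {κ : Type*} [Fintype κ] :
    ∀ (m : ℕ) (h : Fin m → κ → ℂ),
      ∑ f : Fin m → κ, ∏ k, h k (f k) = ∏ k, ∑ i, h k i := by
  intro m
  induction m with
  | zero => intro h; simp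
  | succ m ih =>
      intro h
      rw [← Equiv.sum_comp (Fin.consEquiv (fun _ : Fin (m + 1) => κ))
        (fun f => ∏ k, h k (f k))]
      rw [Fintype.sum_prod_type]
      have key : ∀ (i : κ) (f : Fin m → κ),
          (∏ k : Fin (m + 1), h k ((Fin.consEquiv fun _ : Fin (m + 1) => κ) (i, f) k))
            = h 0 i * ∏ k : Fin m, h k.succ (f k) := by
        intro i f
        rw [Fin.prod_univ_succ]
        simp [Fin.consEquiv, Fin.cons_succ, Fin.cons_zero]
      simp_rw [key]
      rw [← Finset.sum_mul_sum, ih (fun k => h k.succ), Fin.prod_univ_succ]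

lemma contract_sum {L : Type*} [LieRing L] [LieAlgebra ℂ L] [FiniteDimensional ℂ L]
    {n : ℕ} (b : Basis (Fin n) ℂ L) (z : Fin n → L)
    (hdual : ∀ i j, killingForm ℂ L (b i) (z j) = if i = j then 1 else 0)
    (x u v : L) :
    ∑ i : Fin n, killingForm ℂ L (b i) u * killingForm ℂ L ⁅z i, x⁆ v
      = - killingForm ℂ L ⁅u, v⁆ x := by
  have h1 : ∀ i, killingForm ℂ L ⁅z i, x⁆ v = killingForm ℂ L (z i) ⁅x, v⁆ := fun i =>
    LieModule.traceForm_apply_lie_apply ℂ L L (z i) x v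
  have h2 : ∀ i, killingForm ℂ L (z i) ⁅x, v⁆ = b.repr ⁅x, v⁆ i := by
    intro i
    have hd : ∀ j, killingForm ℂ L (z i) (b j) = if j = i then 1 else 0 := fun j =>
      (LieModule.traceForm_comm ℂ L L (z i) (b j)).trans (hdual j i)
    conv_lhs => rw [show ⁅x, v⁆ = ∑ j, b.repr ⁅x, v⁆ j • b j from (b.sum_repr _).symm]
    rw [map_sum]
    simp only [map_smul, smul_eq_mul, hd, mul_ite, mul_one, mul_zero,
      Finset.sum_ite_eq', Finset.mem_univ, if_true]
  have h3 : killingForm ℂ L ⁅x, v⁆ u = ∑ i, killingForm ℂ L (b i) u * b.repr ⁅x, v⁆ i := by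
    conv_lhs => rw [show ⁅x, v⁆ = ∑ j, b.repr ⁅x, v⁆ j • b j from (b.sum_repr _).symm]
    rw [map_sum, LinearMap.sum_apply]
    simp only [map_smul, LinearMap.smul_apply, smul_eq_mul]
    exact Finset.sum_congr rfl fun i _ => mul_comm _ _
  calc ∑ i : Fin n, killingForm ℂ L (b i) u * killingForm ℂ L ⁅z i, x⁆ v
      = ∑ i : Fin n, killingForm ℂ L (b i) u * b.repr ⁅x, v⁆ i := by simp_rw [h1, h2]
    _ = killingForm ℂ L ⁅x, v⁆ u := h3.symm
    _ = killingForm ℂ L x ⁅v, u⁆ := LieModule.traceForm_apply_lie_apply ℂ L L x v u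
    _ = - killingForm ℂ L ⁅u, v⁆ x := by
        rw [show ⁅v, u⁆ = -⁅u, v⁆ from (lie_skew v u).symm, map_neg]
        exact congrArg Neg.neg (LieModule.traceForm_comm ℂ L L x ⁅u, v⁆)

lemma scalar_id (r : ℕ) (S : ℂ) :
    (1 / ((Nat.factorial r : ℂ) * 2 ^ r)) * S
      = ((-1 : ℂ) ^ r / (Nat.factorial r : ℂ)) * ((1/2 : ℂ) ^ r * ((-1 : ℂ) ^ r * S)) := by
  have hsgn : ((-1 : ℂ)) ^ r * (-1 : ℂ) ^ r = 1 := by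
    rw [← mul_pow]; norm_num
  calc (1 / ((Nat.factorial r : ℂ) * 2 ^ r)) * S
      = (((-1 : ℂ) ^ r * (-1 : ℂ) ^ r) * (1 / ((Nat.factorial r : ℂ) * 2 ^ r))) * S := by
        rw [hsgn, one_mul]
    _ = ((-1 : ℂ) ^ r / (Nat.factorial r : ℂ)) * ((1/2 : ℂ) ^ r * ((-1 : ℂ) ^ r * S)) := by
        rw [div_pow, one_pow]
        ring

/-- Let `Γ : ⋀^{2r} g → S^r(g)` be given on decomposables by summing the products of
`[w_{ν(2i-1)}, w_{ν(2i)}]` over perfect matchings `ν`.  Then for any `x ∈ g` and any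
decomposable `ζ = w₁ ∧ ⋯ ∧ w_{2r} ∈ ⋀^{2r} g`,
`Γ(ζ)(x) = ((-1)^r / r!) · ((dx)^r, ζ)`, where `( , )` is the extension `Φ` of the
Killing form `B` to `⋀ g` and `dx = (1/2) ∑ᵢ wᵢ ∧ [zᵢ, x]` (Killing-dual bases). -/
theorem stmt16 (L : Type*) [LieRing L] [LieAlgebra ℂ L] [FiniteDimensional ℂ L]
    [LieAlgebra.IsSemisimple ℂ L]
    (H : LieSubalgebra ℂ L) [H.IsCartanSubalgebra]
    (n r : ℕ) (hn : finrank ℂ L = n) (hnr : n = finrank ℂ H + 2 * r)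
    (b : Basis (Fin n) ℂ L) (z : Fin n → L)
    (hdual : ∀ i j, killingForm ℂ L (b i) (z j) = if i = j then 1 else 0)
    (D : L → ExteriorAlgebra ℂ L)
    (hD : ∀ x : L, D x = (1/2 : ℂ) • ∑ i, ι ℂ (b i) * ι ℂ ⁅z i, x⁆)
    (Φ : LinearMap.BilinForm ℂ (ExteriorAlgebra ℂ L))
    (hdet : ∀ (k : ℕ) (u v : Fin k → L),
      Φ (ιMulti ℂ k u) (ιMulti ℂ k v) =
        (Matrix.of fun i j => killingForm ℂ L (u i) (v j)).det)
    (horth : ∀ (k m : ℕ), k ≠ m → ∀ (u : Fin k → L) (v : Fin m → L),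
      Φ (ιMulti ℂ k u) (ιMulti ℂ m v) = 0) :
    ∀ (x : L) (w : Fin (2 * r) → L),
      GammaVal r w x =
        ((-1 : ℂ) ^ r / (Nat.factorial r : ℂ)) * Φ ((D x) ^ r) (ιMulti ℂ (2 * r) w) := by
  intro x w
  have hpow : (D x) ^ r = (1/2 : ℂ) ^ r • ∑ f : Fin r → Fin n,
      ιMulti ℂ (2 * r) (Vfun (⇑b) (fun i => ⁅z i, x⁆) r f) := by
    rw [hD x, smul_pow, pow_sum_ii]
  have hPhi : Φ ((D x) ^ r) (ιMulti ℂ (2 * r) w)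
      = (1/2 : ℂ) ^ r * ∑ f : Fin r → Fin n,
          ∑ σ : Equiv.Perm (Fin (2 * r)), Equiv.Perm.sign σ •
            ∏ i, killingForm ℂ L (Vfun (⇑b) (fun j => ⁅z j, x⁆) r f (σ i)) (w i) := by
    rw [hpow]
    simp only [map_smul, LinearMap.smul_apply, map_sum, LinearMap.sum_apply, smul_eq_mul]
    congr 1
    refine Finset.sum_congr rfl fun f _ => ?_
    rw [hdet, Matrix.det_apply]
    simp only [Matrix.of_apply]
  have key : ∀ σ : Equiv.Perm (Fin (2 * r)),
      (∑ f : Fin r → Fin n,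
          ∏ i, killingForm ℂ L (Vfun (⇑b) (fun j => ⁅z j, x⁆) r f (σ i)) (w i))
        = (-1 : ℂ) ^ r * ∏ k : Fin r,
            killingForm ℂ L ⁅w (σ⁻¹ ⟨2 * k.1, by have := k.isLt; omega⟩),
              w (σ⁻¹ ⟨2 * k.1 + 1, by have := k.isLt; omega⟩)⁆ x := by
    intro σ
    have step1 : ∀ f : Fin r → Fin n,
        (∏ i, killingForm ℂ L (Vfun (⇑b) (fun j => ⁅z j, x⁆) r f (σ i)) (w i))
          = ∏ k : Fin r,
              (killingForm ℂ L (b (f k)) (w (σ⁻¹ ⟨2 * k.1, by have := k.isLt; omega⟩)) *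
               killingForm ℂ L ⁅z (f k), x⁆
                 (w (σ⁻¹ ⟨2 * k.1 + 1, by have := k.isLt; omega⟩))) := by
      intro f
      calc ∏ i, killingForm ℂ L (Vfun (⇑b) (fun j => ⁅z j, x⁆) r f (σ i)) (w i)
          = ∏ i, killingForm ℂ L (Vfun (⇑b) (fun j => ⁅z j, x⁆) r f (σ (σ⁻¹ i)))
              (w (σ⁻¹ i)) :=
            (Equiv.prod_comp σ⁻¹
              (fun i => killingForm ℂ L (Vfun (⇑b) (fun j => ⁅z j, x⁆) r f (σ i)) (w i))).symm
        _ = ∏ i, killingForm ℂ L (Vfun (⇑b) (fun j => ⁅z j, x⁆) r f i) (w (σ⁻¹ i)) := by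
            refine Finset.prod_congr rfl fun i _ => ?_
            rw [← Equiv.Perm.mul_apply, mul_inv_cancel, Equiv.Perm.one_apply]
        _ = ∏ k : Fin r,
              (killingForm ℂ L
                  (Vfun (⇑b) (fun j => ⁅z j, x⁆) r f ⟨2 * k.1, by have := k.isLt; omega⟩)
                  (w (σ⁻¹ ⟨2 * k.1, by have := k.isLt; omega⟩)) *
               killingForm ℂ L
                  (Vfun (⇑b) (fun j => ⁅z j, x⁆) r f ⟨2 * k.1 + 1, by have := k.isLt; omega⟩)
                  (w (σ⁻¹ ⟨2 * k.1 + 1, by have := k.isLt; omega⟩))) :=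
            prod_pairs r _
        _ = _ := by
            refine Finset.prod_congr rfl fun k _ => ?_
            rw [Vfun_even, Vfun_odd]
    have swap := sum_prod_swap r (fun (k : Fin r) (i : Fin n) =>
      killingForm ℂ L (b i) (w (σ⁻¹ ⟨2 * k.1, by have := k.isLt; omega⟩)) *
      killingForm ℂ L ⁅z i, x⁆ (w (σ⁻¹ ⟨2 * k.1 + 1, by have := k.isLt; omega⟩)))
    calc (∑ f : Fin r → Fin n,
            ∏ i, killingForm ℂ L (Vfun (⇑b) (fun j => ⁅z j, x⁆) r f (σ i)) (w i))
        = ∑ f : Fin r → Fin n, ∏ k : Fin r,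
            (killingForm ℂ L (b (f k)) (w (σ⁻¹ ⟨2 * k.1, by have := k.isLt; omega⟩)) *
             killingForm ℂ L ⁅z (f k), x⁆
               (w (σ⁻¹ ⟨2 * k.1 + 1, by have := k.isLt; omega⟩))) :=
          Finset.sum_congr rfl fun f _ => step1 f
      _ = ∏ k : Fin r, ∑ i : Fin n,
            killingForm ℂ L (b i) (w (σ⁻¹ ⟨2 * k.1, by have := k.isLt; omega⟩)) *
            killingForm ℂ L ⁅z i, x⁆
              (w (σ⁻¹ ⟨2 * k.1 + 1, by have := k.isLt; omega⟩)) := swap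
      _ = ∏ k : Fin r, -(killingForm ℂ L
            ⁅w (σ⁻¹ ⟨2 * k.1, by have := k.isLt; omega⟩),
              w (σ⁻¹ ⟨2 * k.1 + 1, by have := k.isLt; omega⟩)⁆ x) :=
          Finset.prod_congr rfl fun k _ => contract_sum b z hdual x
            (w (σ⁻¹ ⟨2 * k.1, by have := k.isLt; omega⟩))
            (w (σ⁻¹ ⟨2 * k.1 + 1, by have := k.isLt; omega⟩))
      _ = (-1 : ℂ) ^ r * ∏ k : Fin r,
            killingForm ℂ L ⁅w (σ⁻¹ ⟨2 * k.1, by have := k.isLt; omega⟩),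
              w (σ⁻¹ ⟨2 * k.1 + 1, by have := k.isLt; omega⟩)⁆ x := by
          rw [show (-1 : ℂ) ^ r = ∏ _k : Fin r, (-1 : ℂ) by
            rw [Finset.prod_const, Finset.card_univ, Fintype.card_fin]]
          rw [← Finset.prod_mul_distrib]
          exact Finset.prod_congr rfl fun k _ => (neg_one_mul _).symm
  -- put it together
  have main : Φ ((D x) ^ r) (ιMulti ℂ (2 * r) w)
      = (1/2 : ℂ) ^ r * ((-1 : ℂ) ^ r *
          ∑ σ : Equiv.Perm (Fin (2 * r)), ((Equiv.Perm.sign σ : ℤ) : ℂ) *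
            ∏ k : Fin r,
              killingForm ℂ L ⁅w (σ ⟨2 * k.1, by have := k.isLt; omega⟩),
                w (σ ⟨2 * k.1 + 1, by have := k.isLt; omega⟩)⁆ x) := by
    rw [hPhi, Finset.sum_comm]
    congr 1
    calc ∑ σ : Equiv.Perm (Fin (2 * r)), ∑ f : Fin r → Fin n, Equiv.Perm.sign σ •
            ∏ i, killingForm ℂ L (Vfun (⇑b) (fun j => ⁅z j, x⁆) r f (σ i)) (w i)
        = ∑ σ : Equiv.Perm (Fin (2 * r)), ((Equiv.Perm.sign σ : ℤ) : ℂ) *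
            ((-1 : ℂ) ^ r * ∏ k : Fin r,
              killingForm ℂ L ⁅w (σ⁻¹ ⟨2 * k.1, by have := k.isLt; omega⟩),
                w (σ⁻¹ ⟨2 * k.1 + 1, by have := k.isLt; omega⟩)⁆ x) := by
          refine Finset.sum_congr rfl fun σ _ => ?_
          rw [← Finset.smul_sum, key σ, Units.smul_def, zsmul_eq_mul]
      _ = ∑ σ : Equiv.Perm (Fin (2 * r)), ((Equiv.Perm.sign σ : ℤ) : ℂ) *
            ((-1 : ℂ) ^ r * ∏ k : Fin r,
              killingForm ℂ L ⁅w (σ ⟨2 * k.1, by have := k.isLt; omega⟩),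
                w (σ ⟨2 * k.1 + 1, by have := k.isLt; omega⟩)⁆ x) := by
          rw [← Equiv.sum_comp (Equiv.inv (Equiv.Perm (Fin (2 * r))))]
          refine Finset.sum_congr rfl fun σ _ => ?_
          have h1 : (Equiv.inv (Equiv.Perm (Fin (2 * r)))) σ = σ⁻¹ := rfl
          rw [h1, Equiv.Perm.sign_inv, inv_inv]
      _ = (-1 : ℂ) ^ r * ∑ σ : Equiv.Perm (Fin (2 * r)), ((Equiv.Perm.sign σ : ℤ) : ℂ) *
            ∏ k : Fin r,
              killingForm ℂ L ⁅w (σ ⟨2 * k.1, by have := k.isLt; omega⟩),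
                w (σ ⟨2 * k.1 + 1, by have := k.isLt; omega⟩)⁆ x := by
          rw [Finset.mul_sum]
          exact Finset.sum_congr rfl fun σ _ => by ring
  rw [main, GammaVal]
  exact scalar_id r _
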